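/- Let F̃₂(x,t;α,β) = x⁶ + (3t² + 25/3)x⁴ + (3t⁴ + 30t² − 125/9)x² + t⁶ + (17/3)t⁴ + (475/9)t² + 625/9 + 2αt(3x² − t² + 5/3) + 2βx(x² − 3t² − 1/3) + α² + β². Fix real parameters α and β. Then at every point (ξ,η,τ) ∈ ℝ³ where F̃₂(ξ − 3τ, η; α, β) > 0, the function v(ξ,η,τ) = 2·∂²/∂ξ² [ln F̃₂(ξ − 3τ, η; α, β)] satisfies the Kadomtsev–Petviashvili I equation (v_τ + 6·v·v_ξ + v_ξξξ)_ξ = 3·v_ηη. -/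

import Mathlib

/-- Partial derivative in the first variable `ξ`. -/
noncomputable def dXi (f : ℝ → ℝ → ℝ → ℝ) : ℝ → ℝ → ℝ → ℝ :=
  fun ξ η τ => deriv (fun s => f s η τ) ξ

/-- Partial derivative in the second variable `η`. -/
noncomputable def dEta (f : ℝ → ℝ → ℝ → ℝ) : ℝ → ℝ → ℝ → ℝ :=
  fun ξ η τ => deriv (fun s => f ξ s τ) η

/-- Partial derivative in the third variable `τ`. -/
noncomputable def dTau (f : ℝ → ℝ → ℝ → ℝ) : ℝ → ℝ → ℝ → ℝ :=
  fun ξ η τ => deriv (fun s => f ξ η s) τ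

/-- The KPI equation `(v_τ + 6 v v_ξ + v_ξξξ)_ξ = 3 v_ηη` at the point `(ξ,η,τ)`. -/
def KPIAt (v : ℝ → ℝ → ℝ → ℝ) (ξ η τ : ℝ) : Prop :=
  dXi (fun ξ' η' τ' => dTau v ξ' η' τ' + 6 * v ξ' η' τ' * dXi v ξ' η' τ'
      + dXi (dXi (dXi v)) ξ' η' τ') ξ η τ
    = 3 * dEta (dEta v) ξ η τ

/-- The KPI equation `(v_τ + 6 v v_ξ + v_ξξξ)_ξ = 3 v_ηη` on all of ℝ³. -/
def IsKPISolution (v : ℝ → ℝ → ℝ → ℝ) : Prop := ∀ ξ η τ : ℝ, KPIAt v ξ η τ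

/-- `F̃₂(x,t;α,β)`, the generalised rational polynomial from the Boussinesq equation. -/
noncomputable def F2tilde (x t α β : ℝ) : ℝ :=
  x ^ 6 + (3 * t ^ 2 + 25 / 3) * x ^ 4 + (3 * t ^ 4 + 30 * t ^ 2 - 125 / 9) * x ^ 2
    + t ^ 6 + (17 / 3) * t ^ 4 + (475 / 9) * t ^ 2 + 625 / 9
    + 2 * α * t * (3 * x ^ 2 - t ^ 2 + 5 / 3)
    + 2 * β * x * (x ^ 2 - 3 * t ^ 2 - 1 / 3) + α ^ 2 + β ^ 2


private theorem hdc {f : ℝ → ℝ} {f' g' x : ℝ} (h : HasDerivAt f f' x) (e : f' = g') :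
    HasDerivAt f g' x := e ▸ h

private lemma hasDerivAt_poly6 (a6 a5 a4 a3 a2 a1 a0 x : ℝ) :
    HasDerivAt (fun s : ℝ => a6*s^6 + a5*s^5 + a4*s^4 + a3*s^3 + a2*s^2 + a1*s + a0)
      (6*a6*x^5 + 5*a5*x^4 + 4*a4*x^3 + 3*a3*x^2 + 2*a2*x + a1) x := by
  have H := (((((((hasDerivAt_pow 6 x).const_mul a6).add ((hasDerivAt_pow 5 x).const_mul a5)).add
      ((hasDerivAt_pow 4 x).const_mul a4)).add ((hasDerivAt_pow 3 x).const_mul a3)).add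
      ((hasDerivAt_pow 2 x).const_mul a2)).add ((hasDerivAt_id x).const_mul a1)).add
      (hasDerivAt_const x a0)
  exact hdc H (by norm_num; ring)

private lemma shiftX {G : ℝ → ℝ} {d : ℝ} (c ξ : ℝ) (h : HasDerivAt G d (ξ - c)) :
    HasDerivAt (fun s => G (s - c)) d ξ := by
  simpa [Function.comp_def] using h.comp ξ ((hasDerivAt_id ξ).sub_const c)

private lemma shiftTau {G : ℝ → ℝ} {d : ℝ} (ξ τ : ℝ) (h : HasDerivAt G d (ξ - 3 * τ)) :
    HasDerivAt (fun s => G (ξ - 3 * s)) (d * (-3)) τ := by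
  have h2 : HasDerivAt (fun s : ℝ => ξ - 3 * s) (-3) τ := by
    simpa using ((hasDerivAt_id τ).const_mul (3:ℝ)).const_sub ξ
  simpa [Function.comp_def] using h.comp τ h2

private noncomputable def p1 (x t α β : ℝ) : ℝ := (-2/3)*β - 6*t^2*β + (-250/9)*x + 12*x*t*α + 60*x*t^2 + 6*x*t^4 + 6*x^2*β + (100/3)*x^3 + 12*x^3*t^2 + 6*x^5

private noncomputable def p2 (x t α β : ℝ) : ℝ := (-250/9) + 12*t*α + 60*t^2 + 6*t^4 + 12*x*β + 100*x^2 + 36*x^2*t^2 + 30*x^4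

private noncomputable def p3 (x t α β : ℝ) : ℝ := 12*β + 200*x + 72*x*t^2 + 120*x^3

private noncomputable def p4 (x t α β : ℝ) : ℝ := 200 + 72*t^2 + 360*x^2

private noncomputable def p5 (x t α β : ℝ) : ℝ := 720*x

private noncomputable def p6 (x t α β : ℝ) : ℝ := 720

private noncomputable def p0t (x t α β : ℝ) : ℝ := (10/3)*α + (950/9)*t - 6*t^2*α + (68/3)*t^3 + 6*t^5 - 12*x*t*β + 6*x^2*α + 60*x^2*t + 12*x^2*t^3 + 6*x^4*t

private noncomputable def p1t (x t α β : ℝ) : ℝ := -12*t*β + 12*x*α + 120*x*t + 24*x*t^3 + 24*x^3*t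

private noncomputable def p2t (x t α β : ℝ) : ℝ := 12*α + 120*t + 24*t^3 + 72*x^2*t

private noncomputable def p0tt (x t α β : ℝ) : ℝ := (950/9) - 12*t*α + 68*t^2 + 30*t^4 - 12*x*β + 60*x^2 + 36*x^2*t^2 + 6*x^4

private noncomputable def p1tt (x t α β : ℝ) : ℝ := -12*β + 120*x + 72*x*t^2 + 24*x^3

private noncomputable def p2tt (x t α β : ℝ) : ℝ := 120 + 72*t^2 + 72*x^2

private lemma hd_p0x (x t α β : ℝ) :
    HasDerivAt (fun s => F2tilde s t α β) (p1 x t α β) x := by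
  have e : (fun s => F2tilde s t α β) = (fun s : ℝ => (1)*s^6 + (0)*s^5 + ((25/3) + 3*t^2)*s^4 + (2*β)*s^3 + ((-125/9) + 6*t*α + 30*t^2 + 3*t^4)*s^2 + ((-2/3)*β - 6*t^2*β)*s + ((625/9) + β^2 + α^2 + (10/3)*t*α + (475/9)*t^2 - 2*t^3*α + (17/3)*t^4 + t^6)) := by
    funext s; simp only [F2tilde]; ring
  rw [e]
  exact hdc (hasDerivAt_poly6 (1) (0) ((25/3) + 3*t^2) (2*β) ((-125/9) + 6*t*α + 30*t^2 + 3*t^4) ((-2/3)*β - 6*t^2*β) ((625/9) + β^2 + α^2 + (10/3)*t*α + (475/9)*t^2 - 2*t^3*α + (17/3)*t^4 + t^6) x) (by simp only [p1]; ring)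

private lemma hd_p1x (x t α β : ℝ) :
    HasDerivAt (fun s => p1 s t α β) (p2 x t α β) x := by
  have e : (fun s => p1 s t α β) = (fun s : ℝ => (0)*s^6 + (6)*s^5 + (0)*s^4 + ((100/3) + 12*t^2)*s^3 + (6*β)*s^2 + ((-250/9) + 12*t*α + 60*t^2 + 6*t^4)*s + ((-2/3)*β - 6*t^2*β)) := by
    funext s; simp only [p1]; ring
  rw [e]
  exact hdc (hasDerivAt_poly6 (0) (6) (0) ((100/3) + 12*t^2) (6*β) ((-250/9) + 12*t*α + 60*t^2 + 6*t^4) ((-2/3)*β - 6*t^2*β) x) (by simp only [p2]; ring)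

private lemma hd_p2x (x t α β : ℝ) :
    HasDerivAt (fun s => p2 s t α β) (p3 x t α β) x := by
  have e : (fun s => p2 s t α β) = (fun s : ℝ => (0)*s^6 + (0)*s^5 + (30)*s^4 + (0)*s^3 + (100 + 36*t^2)*s^2 + (12*β)*s + ((-250/9) + 12*t*α + 60*t^2 + 6*t^4)) := by
    funext s; simp only [p2]; ring
  rw [e]
  exact hdc (hasDerivAt_poly6 (0) (0) (30) (0) (100 + 36*t^2) (12*β) ((-250/9) + 12*t*α + 60*t^2 + 6*t^4) x) (by simp only [p3]; ring)

private lemma hd_p3x (x t α β : ℝ) :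
    HasDerivAt (fun s => p3 s t α β) (p4 x t α β) x := by
  have e : (fun s => p3 s t α β) = (fun s : ℝ => (0)*s^6 + (0)*s^5 + (0)*s^4 + (120)*s^3 + (0)*s^2 + (200 + 72*t^2)*s + (12*β)) := by
    funext s; simp only [p3]; ring
  rw [e]
  exact hdc (hasDerivAt_poly6 (0) (0) (0) (120) (0) (200 + 72*t^2) (12*β) x) (by simp only [p4]; ring)

private lemma hd_p4x (x t α β : ℝ) :
    HasDerivAt (fun s => p4 s t α β) (p5 x t α β) x := by
  have e : (fun s => p4 s t α β) = (fun s : ℝ => (0)*s^6 + (0)*s^5 + (0)*s^4 + (0)*s^3 + (360)*s^2 + (0)*s + (200 + 72*t^2)) := by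
    funext s; simp only [p4]; ring
  rw [e]
  exact hdc (hasDerivAt_poly6 (0) (0) (0) (0) (360) (0) (200 + 72*t^2) x) (by simp only [p5]; ring)

private lemma hd_p5x (x t α β : ℝ) :
    HasDerivAt (fun s => p5 s t α β) (p6 x t α β) x := by
  have e : (fun s => p5 s t α β) = (fun s : ℝ => (0)*s^6 + (0)*s^5 + (0)*s^4 + (0)*s^3 + (0)*s^2 + (720)*s + (0)) := by
    funext s; simp only [p5]; ring
  rw [e]
  exact hdc (hasDerivAt_poly6 (0) (0) (0) (0) (0) (720) (0) x) (by simp only [p6]; ring)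

private lemma hd_p0T (x t α β : ℝ) :
    HasDerivAt (fun r => F2tilde x r α β) (p0t x t α β) t := by
  have e : (fun r => F2tilde x r α β) = (fun r : ℝ => (1)*r^6 + (0)*r^5 + ((17/3) + 3*x^2)*r^4 + (-2*α)*r^3 + ((475/9) - 6*x*β + 30*x^2 + 3*x^4)*r^2 + ((10/3)*α + 6*x^2*α)*r + ((625/9) + β^2 + α^2 + (-2/3)*x*β + (-125/9)*x^2 + 2*x^3*β + (25/3)*x^4 + x^6)) := by
    funext r; simp only [F2tilde]; ring
  rw [e]
  exact hdc (hasDerivAt_poly6 (1) (0) ((17/3) + 3*x^2) (-2*α) ((475/9) - 6*x*β + 30*x^2 + 3*x^4) ((10/3)*α + 6*x^2*α) ((625/9) + β^2 + α^2 + (-2/3)*x*β + (-125/9)*x^2 + 2*x^3*β + (25/3)*x^4 + x^6) t) (by simp only [p0t]; ring)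

private lemma hd_p1T (x t α β : ℝ) :
    HasDerivAt (fun r => p1 x r α β) (p1t x t α β) t := by
  have e : (fun r => p1 x r α β) = (fun r : ℝ => (0)*r^6 + (0)*r^5 + (6*x)*r^4 + (0)*r^3 + (-6*β + 60*x + 12*x^3)*r^2 + (12*x*α)*r + ((-2/3)*β + (-250/9)*x + 6*x^2*β + (100/3)*x^3 + 6*x^5)) := by
    funext r; simp only [p1]; ring
  rw [e]
  exact hdc (hasDerivAt_poly6 (0) (0) (6*x) (0) (-6*β + 60*x + 12*x^3) (12*x*α) ((-2/3)*β + (-250/9)*x + 6*x^2*β + (100/3)*x^3 + 6*x^5) t) (by simp only [p1t]; ring)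

private lemma hd_p2T (x t α β : ℝ) :
    HasDerivAt (fun r => p2 x r α β) (p2t x t α β) t := by
  have e : (fun r => p2 x r α β) = (fun r : ℝ => (0)*r^6 + (0)*r^5 + (6)*r^4 + (0)*r^3 + (60 + 36*x^2)*r^2 + (12*α)*r + ((-250/9) + 12*x*β + 100*x^2 + 30*x^4)) := by
    funext r; simp only [p2]; ring
  rw [e]
  exact hdc (hasDerivAt_poly6 (0) (0) (6) (0) (60 + 36*x^2) (12*α) ((-250/9) + 12*x*β + 100*x^2 + 30*x^4) t) (by simp only [p2t]; ring)

private lemma hd_p0tT (x t α β : ℝ) :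
    HasDerivAt (fun r => p0t x r α β) (p0tt x t α β) t := by
  have e : (fun r => p0t x r α β) = (fun r : ℝ => (0)*r^6 + (6)*r^5 + (0)*r^4 + ((68/3) + 12*x^2)*r^3 + (-6*α)*r^2 + ((950/9) - 12*x*β + 60*x^2 + 6*x^4)*r + ((10/3)*α + 6*x^2*α)) := by
    funext r; simp only [p0t]; ring
  rw [e]
  exact hdc (hasDerivAt_poly6 (0) (6) (0) ((68/3) + 12*x^2) (-6*α) ((950/9) - 12*x*β + 60*x^2 + 6*x^4) ((10/3)*α + 6*x^2*α) t) (by simp only [p0tt]; ring)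

private lemma hd_p1tT (x t α β : ℝ) :
    HasDerivAt (fun r => p1t x r α β) (p1tt x t α β) t := by
  have e : (fun r => p1t x r α β) = (fun r : ℝ => (0)*r^6 + (0)*r^5 + (0)*r^4 + (24*x)*r^3 + (0)*r^2 + (-12*β + 120*x + 24*x^3)*r + (12*x*α)) := by
    funext r; simp only [p1t]; ring
  rw [e]
  exact hdc (hasDerivAt_poly6 (0) (0) (0) (24*x) (0) (-12*β + 120*x + 24*x^3) (12*x*α) t) (by simp only [p1tt]; ring)

private lemma hd_p2tT (x t α β : ℝ) :
    HasDerivAt (fun r => p2t x r α β) (p2tt x t α β) t := by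
  have e : (fun r => p2t x r α β) = (fun r : ℝ => (0)*r^6 + (0)*r^5 + (0)*r^4 + (24)*r^3 + (0)*r^2 + (120 + 72*x^2)*r + (12*α)) := by
    funext r; simp only [p2t]; ring
  rw [e]
  exact hdc (hasDerivAt_poly6 (0) (0) (0) (24) (0) (120 + 72*x^2) (12*α) t) (by simp only [p2tt]; ring)

private noncomputable def g1 (x t α β : ℝ) : ℝ :=
  (p1 x t α β) / (F2tilde x t α β)

private noncomputable def g2 (x t α β : ℝ) : ℝ :=
  ((-1) * (p1 x t α β * p1 x t α β) + F2tilde x t α β * p2 x t α β) / (F2tilde x t α β * F2tilde x t α β)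

private noncomputable def g3 (x t α β : ℝ) : ℝ :=
  ((2) * (p1 x t α β * p1 x t α β * p1 x t α β) + (-3) * (F2tilde x t α β * p1 x t α β * p2 x t α β) + F2tilde x t α β * F2tilde x t α β * p3 x t α β) / (F2tilde x t α β * F2tilde x t α β * F2tilde x t α β)

private noncomputable def g4 (x t α β : ℝ) : ℝ :=
  ((-6) * (p1 x t α β * p1 x t α β * p1 x t α β * p1 x t α β) + (12) * (F2tilde x t α β * p1 x t α β * p1 x t α β * p2 x t α β) + (-3) * (F2tilde x t α β * F2tilde x t α β * p2 x t α β * p2 x t α β) + (-4) * (F2tilde x t α β * F2tilde x t α β * p1 x t α β * p3 x t α β) + F2tilde x t α β * F2tilde x t α β * F2tilde x t α β * p4 x t α β) / (F2tilde x t α β * F2tilde x t α β * F2tilde x t α β * F2tilde x t α β)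

private noncomputable def g5 (x t α β : ℝ) : ℝ :=
  ((24) * (p1 x t α β * p1 x t α β * p1 x t α β * p1 x t α β * p1 x t α β) + (-60) * (F2tilde x t α β * p1 x t α β * p1 x t α β * p1 x t α β * p2 x t α β) + (30) * (F2tilde x t α β * F2tilde x t α β * p1 x t α β * p2 x t α β * p2 x t α β) + (20) * (F2tilde x t α β * F2tilde x t α β * p1 x t α β * p1 x t α β * p3 x t α β) + (-10) * (F2tilde x t α β * F2tilde x t α β * F2tilde x t α β * p2 x t α β * p3 x t α β) + (-5) * (F2tilde x t α β * F2tilde x t α β * F2tilde x t α β * p1 x t α β * p4 x t α β) + F2tilde x t α β * F2tilde x t α β * F2tilde x t α β * F2tilde x t α β * p5 x t α β) / (F2tilde x t α β * F2tilde x t α β * F2tilde x t α β * F2tilde x t α β * F2tilde x t α β)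

private noncomputable def g6 (x t α β : ℝ) : ℝ :=
  ((-120) * (p1 x t α β * p1 x t α β * p1 x t α β * p1 x t α β * p1 x t α β * p1 x t α β) + (360) * (F2tilde x t α β * p1 x t α β * p1 x t α β * p1 x t α β * p1 x t α β * p2 x t α β) + (-270) * (F2tilde x t α β * F2tilde x t α β * p1 x t α β * p1 x t α β * p2 x t α β * p2 x t α β) + (-120) * (F2tilde x t α β * F2tilde x t α β * p1 x t α β * p1 x t α β * p1 x t α β * p3 x t α β) + (30) * (F2tilde x t α β * F2tilde x t α β * F2tilde x t α β * p2 x t α β * p2 x t α β * p2 x t α β) + (120) * (F2tilde x t α β * F2tilde x t α β * F2tilde x t α β * p1 x t α β * p2 x t α β * p3 x t α β) + (30) * (F2tilde x t α β * F2tilde x t α β * F2tilde x t α β * p1 x t α β * p1 x t α β * p4 x t α β) + (-10) * (F2tilde x t α β * F2tilde x t α β * F2tilde x t α β * F2tilde x t α β * p3 x t α β * p3 x t α β) + (-15) * (F2tilde x t α β * F2tilde x t α β * F2tilde x t α β * F2tilde x t α β * p2 x t α β * p4 x t α β) + (-6) * (F2tilde x t α β * F2tilde x t α β * F2tilde x t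 α β * F2tilde x t α β * p1 x t α β * p5 x t α β) + F2tilde x t α β * F2tilde x t α β * F2tilde x t α β * F2tilde x t α β * F2tilde x t α β * p6 x t α β) / (F2tilde x t α β * F2tilde x t α β * F2tilde x t α β * F2tilde x t α β * F2tilde x t α β * F2tilde x t α β)

private noncomputable def g2t (x t α β : ℝ) : ℝ :=
  ((2) * (p1 x t α β * p1 x t α β * p0t x t α β) + (-1) * (F2tilde x t α β * p2 x t α β * p0t x t α β) + (-2) * (F2tilde x t α β * p1 x t α β * p1t x t α β) + F2tilde x t α β * F2tilde x t α β * p2t x t α β) / (F2tilde x t α β * F2tilde x t α β * F2tilde x t α β)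

private noncomputable def g2tt (x t α β : ℝ) : ℝ :=
  ((-6) * (p1 x t α β * p1 x t α β * p0t x t α β * p0t x t α β) + (2) * (F2tilde x t α β * p2 x t α β * p0t x t α β * p0t x t α β) + (8) * (F2tilde x t α β * p1 x t α β * p0t x t α β * p1t x t α β) + (2) * (F2tilde x t α β * p1 x t α β * p1 x t α β * p0tt x t α β) + (-2) * (F2tilde x t α β * F2tilde x t α β * p1t x t α β * p1t x t α β) + (-2) * (F2tilde x t α β * F2tilde x t α β * p0t x t α β * p2t x t α β) + (-1) * (F2tilde x t α β * F2tilde x t α β * p2 x t α β * p0tt x t α β) + (-2) * (F2tilde x t α β * F2tilde x t α β * p1 x t α β * p1tt x t α β) + F2tilde x t α β * F2tilde x t α β * F2tilde x t α β * p2tt x t α β) / (F2tilde x t α β * F2tilde x t α β * F2tilde x t α β * F2tilde x t α β)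

private lemma hg1 (x t α β : ℝ) (h : F2tilde x t α β ≠ 0) :
    HasDerivAt (fun s => Real.log (F2tilde s t α β)) (g1 x t α β) x := by
  exact hdc ((hd_p0x x t α β).log h) (by simp only [g1])

private lemma hg2 (x t α β : ℝ) (h : F2tilde x t α β ≠ 0) :
    HasDerivAt (fun s => g1 s t α β) (g2 x t α β) x := by
  have hnum := (hd_p1x x t α β)
  have hden := (hd_p0x x t α β)
  have H := hnum.div hden (h)
  exact hdc H (by simp only [g2]; field_simp; ring)

private lemma hg3 (x t α β : ℝ) (h : F2tilde x t α β ≠ 0) :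
    HasDerivAt (fun s => g2 s t α β) (g3 x t α β) x := by
  have hnum := ((((hd_p1x x t α β).mul (hd_p1x x t α β)).const_mul (-1)).add ((hd_p0x x t α β).mul (hd_p2x x t α β)))
  have hden := ((hd_p0x x t α β).mul (hd_p0x x t α β))
  have H := hnum.div hden ((mul_ne_zero h h))
  exact hdc H (by simp only [g3, Pi.mul_apply, Pi.add_apply]; field_simp; ring)

private lemma hg4 (x t α β : ℝ) (h : F2tilde x t α β ≠ 0) :
    HasDerivAt (fun s => g3 s t α β) (g4 x t α β) x := by
  have hnum := ((((((hd_p1x x t α β).mul (hd_p1x x t α β)).mul (hd_p1x x t α β)).const_mul (2)).add ((((hd_p0x x t α β).mul (hd_p1x x t α β)).mul (hd_p2x x t α β)).const_mul (-3))).add (((hd_p0x x t α β).mul (hd_p0x x t α β)).mul (hd_p3x x t α β)))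
  have hden := (((hd_p0x x t α β).mul (hd_p0x x t α β)).mul (hd_p0x x t α β))
  have H := hnum.div hden ((mul_ne_zero (mul_ne_zero h h) h))
  exact hdc H (by simp only [g4, Pi.mul_apply, Pi.add_apply]; field_simp; ring)

private lemma hg5 (x t α β : ℝ) (h : F2tilde x t α β ≠ 0) :
    HasDerivAt (fun s => g4 s t α β) (g5 x t α β) x := by
  have hnum := (((((((((hd_p1x x t α β).mul (hd_p1x x t α β)).mul (hd_p1x x t α β)).mul (hd_p1x x t α β)).const_mul (-6)).add (((((hd_p0x x t α β).mul (hd_p1x x t α β)).mul (hd_p1x x t α β)).mul (hd_p2x x t α β)).const_mul (12))).add (((((hd_p0x x t α β).mul (hd_p0x x t α β)).mul (hd_p2x x t α β)).mul (hd_p2x x t α β)).const_mul (-3))).add (((((hd_p0x x t α β).mul (hd_p0x x t α β)).mul (hd_p1x x t α β)).mul (hd_p3x x t α β)).const_mul (-4))).add ((((hd_p0x x t α β).mul (hd_p0x x t α β)).mul (hd_p0x x t α β)).mul (hd_p4x x t α β)))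
  have hden := ((((hd_p0x x t α β).mul (hd_p0x x t α β)).mul (hd_p0x x t α β)).mul (hd_p0x x t α β))
  have H := hnum.div hden ((mul_ne_zero (mul_ne_zero (mul_ne_zero h h) h) h))
  exact hdc H (by simp only [g5, Pi.mul_apply, Pi.add_apply]; field_simp; ring)

private lemma hg6 (x t α β : ℝ) (h : F2tilde x t α β ≠ 0) :
    HasDerivAt (fun s => g5 s t α β) (g6 x t α β) x := by
  have hnum := ((((((((((((hd_p1x x t α β).mul (hd_p1x x t α β)).mul (hd_p1x x t α β)).mul (hd_p1x x t α β)).mul (hd_p1x x t α β)).const_mul (24)).add ((((((hd_p0x x t α β).mul (hd_p1x x t α β)).mul (hd_p1x x t α β)).mul (hd_p1x x t α β)).mul (hd_p2x x t α β)).const_mul (-60))).add ((((((hd_p0x x t α β).mul (hd_p0x x t α β)).mul (hd_p1x x t α β)).mul (hd_p2x x t α β)).mul (hd_p2x x t α β)).const_mul (30))).add ((((((hd_p0x x t α β).mul (hd_p0x x t α β)).mul (hd_p1x x t α β)).mul (hd_p1x x t α β)).mul (hd_p3x x t α β)).const_mul (20))).add ((((((hd_p0x x t α β).mul (hd_p0x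 x t α β)).mul (hd_p0x x t α β)).mul (hd_p2x x t α β)).mul (hd_p3x x t α β)).const_mul (-10))).add ((((((hd_p0x x t α β).mul (hd_p0x x t α β)).mul (hd_p0x x t α β)).mul (hd_p1x x t α β)).mul (hd_p4x x t α β)).const_mul (-5))).add (((((hd_p0x x t α β).mul (hd_p0x x t α β)).mul (hd_p0x x t α β)).mul (hd_p0x x t α β)).mul (hd_p5x x t α β)))
  have hden := (((((hd_p0x x t α β).mul (hd_p0x x t α β)).mul (hd_p0x x t α β)).mul (hd_p0x x t α β)).mul (hd_p0x x t α β))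
  have H := hnum.div hden ((mul_ne_zero (mul_ne_zero (mul_ne_zero (mul_ne_zero h h) h) h) h))
  exact hdc H (by simp only [g6, Pi.mul_apply, Pi.add_apply]; field_simp; ring)

private lemma hg2t (x t α β : ℝ) (h : F2tilde x t α β ≠ 0) :
    HasDerivAt (fun r => g2 x r α β) (g2t x t α β) t := by
  have hnum := ((((hd_p1T x t α β).mul (hd_p1T x t α β)).const_mul (-1)).add ((hd_p0T x t α β).mul (hd_p2T x t α β)))
  have hden := ((hd_p0T x t α β).mul (hd_p0T x t α β))
  have H := hnum.div hden ((mul_ne_zero h h))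
  exact hdc H (by simp only [g2t, Pi.mul_apply, Pi.add_apply]; field_simp; ring)

private lemma hg2tt (x t α β : ℝ) (h : F2tilde x t α β ≠ 0) :
    HasDerivAt (fun r => g2t x r α β) (g2tt x t α β) t := by
  have hnum := (((((((hd_p1T x t α β).mul (hd_p1T x t α β)).mul (hd_p0tT x t α β)).const_mul (2)).add ((((hd_p0T x t α β).mul (hd_p2T x t α β)).mul (hd_p0tT x t α β)).const_mul (-1))).add ((((hd_p0T x t α β).mul (hd_p1T x t α β)).mul (hd_p1tT x t α β)).const_mul (-2))).add (((hd_p0T x t α β).mul (hd_p0T x t α β)).mul (hd_p2tT x t α β)))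
  have hden := (((hd_p0T x t α β).mul (hd_p0T x t α β)).mul (hd_p0T x t α β))
  have H := hnum.div hden ((mul_ne_zero (mul_ne_zero h h) h))
  exact hdc H (by simp only [g2tt, Pi.mul_apply, Pi.add_apply]; field_simp; ring)

private lemma keyfree (P0 P1 P2 P3 P4 P5 P6 Q0 Q1 Q2 R0 R1 R2 : ℝ) (h : P0 ≠ 0)
    (hb : (3) * (Q0 * Q0) + (3) * (P2 * P2) + (-4) * (P1 * P3) + (3) * (P1 * P1) + (-3) * (P0 * R0) + P0 * P4 + (-3) * (P0 * P2) = 0)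
    (hbx : (6) * (Q0 * Q1) + (2) * (P2 * P3) + (-3) * (P1 * R0) + (-3) * (P1 * P4) + (3) * (P1 * P2) + (-3) * (P0 * R1) + P0 * P5 + (-3) * (P0 * P3) = 0)
    (hbxx : (6) * (Q1 * Q1) + (6) * (Q0 * Q2) + (2) * (P3 * P3) + (-3) * (P2 * R0) + (-1) * (P2 * P4) + (3) * (P2 * P2) + (-6) * (P1 * R1) + (-2) * (P1 * P5) + (-3) * (P0 * R2) + P0 * P6 + (-3) * (P0 * P4) = 0) :
    (-6) * (((-6) * (P1 * P1 * P1 * P1) + (12) * (P0 * P1 * P1 * P2) + (-3) * (P0 * P0 * P2 * P2) + (-4) * (P0 * P0 * P1 * P3) + P0 * P0 * P0 * P4) / (P0 * P0 * P0 * P0)) + 24 * (((2) * (P1 * P1 * P1) + (-3) * (P0 * P1 * P2) + P0 * P0 * P3) / (P0 * P0 * P0) * (((2) * (P1 * P1 * P1) + (-3) * (P0 * P1 * P2) + P0 * P0 * P3) / (P0 * P0 * P0))) + 24 * (((-1) * (P1 * P1) + P0 * P2) / (P0 * P0) * (((-6) * (P1 * P1 * P1 * P1) + (12) * (P0 * P1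 * P1 * P2) + (-3) * (P0 * P0 * P2 * P2) + (-4) * (P0 * P0 * P1 * P3) + P0 * P0 * P0 * P4) / (P0 * P0 * P0 * P0))) + 2 * (((-120) * (P1 * P1 * P1 * P1 * P1 * P1) + (360) * (P0 * P1 * P1 * P1 * P1 * P2) + (-270) * (P0 * P0 * P1 * P1 * P2 * P2) + (-120) * (P0 * P0 * P1 * P1 * P1 * P3) + (30) * (P0 * P0 * P0 * P2 * P2 * P2) + (120) * (P0 * P0 * P0 * P1 * P2 * P3) + (30) * (P0 * P0 * P0 * P1 * P1 * P4) + (-10) * (P0 * P0 * P0 * P0 * P3 * P3) + (-15) * (P0 * P0 * P0 * P0 * P2 * P4) + (-6) * (P0 * P0 * P0 * P0 * P1 * P5) + P0 * P0 * P0 * P0 * P0 * P6) / (P0 * P0 * P0 * P0 * P0 * P0)) - 6 * (((-6) * (P1 * P1 * Q0 * Q0) + (2) * (P0 * P2 * Q0 * Q0) + (8) * (P0 * P1 * Q0 * Q1) + (2) * (P0 * P1 * P1 * R0) + (-2) * (P0 * P0 * Q1 * Q1) + (-2) * (P0 * P0 * Q0 * Q2) + (-1) * (P0 * P0 * P2 *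 R0) + (-2) * (P0 * P0 * P1 * R1) + P0 * P0 * P0 * R2) / (P0 * P0 * P0 * P0)) = 0 := by
  have e : (2 * ((6) * (Q1 * Q1) + (6) * (Q0 * Q2) + (2) * (P3 * P3) + (-3) * (P2 * R0) + (-1) * (P2 * P4) + (3) * (P2 * P2) + (-6) * (P1 * R1) + (-2) * (P1 * P5) + (-3) * (P0 * R2) + P0 * P6 + (-3) * (P0 * P4)) * P0 * P0 - 8 * ((6) * (Q0 * Q1) + (2) * (P2 * P3) + (-3) * (P1 * R0) + (-3) * (P1 * P4) + (3) * (P1 * P2) + (-3) * (P0 * R1) + P0 * P5 + (-3) * (P0 * P3)) * P0 * P1 - 4 * ((3) * (Q0 * Q0) + (3) * (P2 * P2) + (-4) * (P1 * P3) + (3) * (P1 * P1) + (-3) * (P0 * R0) + P0 * P4 + (-3) * (P0 * P2)) * P0 * P2 + 12 * ((3) * (Q0 * Q0) + (3) * (P2 * P2) + (-4) * (P1 * P3) + (3) * (P1 * P1) + (-3) * (P0 * R0) + P0 * P4 + (-3) * (P0 * P2)) * P1 * P1) / (P0 * P0 * P0 * P0) = 0 := by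
    rw [hb, hbx, hbxx]; ring
  rw [← e]
  field_simp
  ring

private lemma hbapp (x t α β : ℝ) : (3) * (p0t x t α β * p0t x t α β) + (3) * (p2 x t α β * p2 x t α β) + (-4) * (p1 x t α β * p3 x t α β) + (3) * (p1 x t α β * p1 x t α β) + (-3) * (F2tilde x t α β * p0tt x t α β) + F2tilde x t α β * p4 x t α β + (-3) * (F2tilde x t α β * p2 x t α β) = 0 := by
  simp only [F2tilde, p1, p2, p3, p4, p5, p6, p0t, p1t, p2t, p0tt, p1tt, p2tt]; ring

private lemma hbxapp (x t α β : ℝ) : (6) * (p0t x t α β * p1t x t α β) + (2) * (p2 x t α β * p3 x t α β) + (-3) * (p1 x t α β * p0tt x t α β) + (-3) * (p1 x t α β * p4 x t α β) + (3) * (p1 x t α β * p2 x t α β) + (-3) * (F2tilde x t α β * p1tt x t α β) + F2tilde x t α β * p5 x t α β + (-3) * (F2tilde x t α β * p3 x t α β) = 0 := by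
  simp only [F2tilde, p1, p2, p3, p4, p5, p6, p0t, p1t, p2t, p0tt, p1tt, p2tt]; ring

private lemma hbxxapp (x t α β : ℝ) : (6) * (p1t x t α β * p1t x t α β) + (6) * (p0t x t α β * p2t x t α β) + (2) * (p3 x t α β * p3 x t α β) + (-3) * (p2 x t α β * p0tt x t α β) + (-1) * (p2 x t α β * p4 x t α β) + (3) * (p2 x t α β * p2 x t α β) + (-6) * (p1 x t α β * p1tt x t α β) + (-2) * (p1 x t α β * p5 x t α β) + (-3) * (F2tilde x t α β * p2tt x t α β) + F2tilde x t α β * p6 x t α β + (-3) * (F2tilde x t α β * p4 x t α β) = 0 := by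
  simp only [F2tilde, p1, p2, p3, p4, p5, p6, p0t, p1t, p2t, p0tt, p1tt, p2tt]; ring

private lemma key (x t α β : ℝ) (h : F2tilde x t α β ≠ 0) :
    (-6) * g4 x t α β + 24 * (g3 x t α β * g3 x t α β) + 24 * (g2 x t α β * g4 x t α β)
      + 2 * g6 x t α β - 6 * g2tt x t α β = 0 := by
  have H := keyfree (F2tilde x t α β) (p1 x t α β) (p2 x t α β) (p3 x t α β) (p4 x t α β) (p5 x t α β) (p6 x t α β) (p0t x t α β) (p1t x t α β) (p2t x t α β) (p0tt x t α β) (p1tt x t α β) (p2tt x t α β) h (hbapp x t α β) (hbxapp x t α β) (hbxxapp x t α β)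
  simp only [g2, g3, g4, g6, g2tt]
  linear_combination H


private noncomputable def vv (α β : ℝ) : ℝ → ℝ → ℝ → ℝ := fun ξ' η' τ' =>
  2 * dXi (dXi (fun ξ'' η'' τ'' => Real.log (F2tilde (ξ'' - 3 * τ'') η'' α β))) ξ' η' τ'

private lemma evx (α β t c : ℝ) {ξ : ℝ} (h : F2tilde (ξ - c) t α β ≠ 0) :
    ∀ᶠ s in nhds ξ, F2tilde (s - c) t α β ≠ 0 := by
  have hc : ContinuousAt (fun s : ℝ => F2tilde (s - c) t α β) ξ := by
    unfold F2tilde; fun_prop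
  exact hc.eventually_ne h

private lemma evtau (α β ξ η : ℝ) {τ : ℝ} (h : F2tilde (ξ - 3 * τ) η α β ≠ 0) :
    ∀ᶠ s in nhds τ, F2tilde (ξ - 3 * s) η α β ≠ 0 := by
  have hc : ContinuousAt (fun s : ℝ => F2tilde (ξ - 3 * s) η α β) τ := by
    unfold F2tilde; fun_prop
  exact hc.eventually_ne h

private lemma evt (α β x : ℝ) {η : ℝ} (h : F2tilde x η α β ≠ 0) :
    ∀ᶠ r in nhds η, F2tilde x r α β ≠ 0 := by
  have hc : ContinuousAt (fun r : ℝ => F2tilde x r α β) η := by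
    unfold F2tilde; fun_prop
  exact hc.eventually_ne h

private lemma pw1 (α β ξ η τ : ℝ) (h : F2tilde (ξ - 3 * τ) η α β ≠ 0) :
    dXi (fun ξ'' η'' τ'' => Real.log (F2tilde (ξ'' - 3 * τ'') η'' α β)) ξ η τ
      = g1 (ξ - 3 * τ) η α β := by
  show deriv (fun s => Real.log (F2tilde (s - 3 * τ) η α β)) ξ = _
  exact (shiftX (3 * τ) ξ (hg1 (ξ - 3 * τ) η α β h)).deriv

private lemma pw2 (α β ξ η τ : ℝ) (h : F2tilde (ξ - 3 * τ) η α β ≠ 0) :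
    dXi (dXi (fun ξ'' η'' τ'' => Real.log (F2tilde (ξ'' - 3 * τ'') η'' α β))) ξ η τ
      = g2 (ξ - 3 * τ) η α β := by
  show deriv (fun s => dXi (fun ξ'' η'' τ'' => Real.log (F2tilde (ξ'' - 3 * τ'') η'' α β)) s η τ) ξ = _
  have hev : (fun s => dXi (fun ξ'' η'' τ'' => Real.log (F2tilde (ξ'' - 3 * τ'') η'' α β)) s η τ)
      =ᶠ[nhds ξ] fun s => g1 (s - 3 * τ) η α β := by
    filter_upwards [evx α β η (3 * τ) h] with s hs using pw1 α β s η τ hs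
  rw [hev.deriv_eq]
  exact (shiftX (3 * τ) ξ (hg2 (ξ - 3 * τ) η α β h)).deriv

private lemma pwv (α β ξ η τ : ℝ) (h : F2tilde (ξ - 3 * τ) η α β ≠ 0) :
    vv α β ξ η τ = 2 * g2 (ξ - 3 * τ) η α β := by
  show 2 * dXi (dXi (fun ξ'' η'' τ'' => Real.log (F2tilde (ξ'' - 3 * τ'') η'' α β))) ξ η τ = _
  rw [pw2 α β ξ η τ h]

private lemma pw3 (α β ξ η τ : ℝ) (h : F2tilde (ξ - 3 * τ) η α β ≠ 0) :
    dXi (vv α β) ξ η τ = 2 * g3 (ξ - 3 * τ) η α β := by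
  show deriv (fun s => vv α β s η τ) ξ = _
  have hev : (fun s => vv α β s η τ) =ᶠ[nhds ξ] fun s => 2 * g2 (s - 3 * τ) η α β := by
    filter_upwards [evx α β η (3 * τ) h] with s hs using pwv α β s η τ hs
  rw [hev.deriv_eq]
  exact ((shiftX (3 * τ) ξ (hg3 (ξ - 3 * τ) η α β h)).const_mul 2).deriv

private lemma pw4 (α β ξ η τ : ℝ) (h : F2tilde (ξ - 3 * τ) η α β ≠ 0) :
    dXi (dXi (vv α β)) ξ η τ = 2 * g4 (ξ - 3 * τ) η α β := by
  show deriv (fun s => dXi (vv α β) s η τ) ξ = _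
  have hev : (fun s => dXi (vv α β) s η τ) =ᶠ[nhds ξ] fun s => 2 * g3 (s - 3 * τ) η α β := by
    filter_upwards [evx α β η (3 * τ) h] with s hs using pw3 α β s η τ hs
  rw [hev.deriv_eq]
  exact ((shiftX (3 * τ) ξ (hg4 (ξ - 3 * τ) η α β h)).const_mul 2).deriv

private lemma pw5 (α β ξ η τ : ℝ) (h : F2tilde (ξ - 3 * τ) η α β ≠ 0) :
    dXi (dXi (dXi (vv α β))) ξ η τ = 2 * g5 (ξ - 3 * τ) η α β := by
  show deriv (fun s => dXi (dXi (vv α β)) s η τ) ξ = _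
  have hev : (fun s => dXi (dXi (vv α β)) s η τ) =ᶠ[nhds ξ] fun s => 2 * g4 (s - 3 * τ) η α β := by
    filter_upwards [evx α β η (3 * τ) h] with s hs using pw4 α β s η τ hs
  rw [hev.deriv_eq]
  exact ((shiftX (3 * τ) ξ (hg5 (ξ - 3 * τ) η α β h)).const_mul 2).deriv

private lemma pwt (α β ξ η τ : ℝ) (h : F2tilde (ξ - 3 * τ) η α β ≠ 0) :
    dTau (vv α β) ξ η τ = 2 * (g3 (ξ - 3 * τ) η α β * (-3)) := by
  show deriv (fun s => vv α β ξ η s) τ = _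
  have hev : (fun s => vv α β ξ η s) =ᶠ[nhds τ] fun s => 2 * g2 (ξ - 3 * s) η α β := by
    filter_upwards [evtau α β ξ η h] with s hs using pwv α β ξ η s hs
  rw [hev.deriv_eq]
  exact ((shiftTau ξ τ (hg3 (ξ - 3 * τ) η α β h)).const_mul 2).deriv

private lemma pwe (α β ξ η τ : ℝ) (h : F2tilde (ξ - 3 * τ) η α β ≠ 0) :
    dEta (vv α β) ξ η τ = 2 * g2t (ξ - 3 * τ) η α β := by
  show deriv (fun r => vv α β ξ r τ) η = _
  have hev : (fun r => vv α β ξ r τ) =ᶠ[nhds η] fun r => 2 * g2 (ξ - 3 * τ) r α β := by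
    filter_upwards [evt α β (ξ - 3 * τ) h] with r hr using pwv α β ξ r τ hr
  rw [hev.deriv_eq]
  exact ((hg2t (ξ - 3 * τ) η α β h).const_mul 2).deriv

private lemma pwee (α β ξ η τ : ℝ) (h : F2tilde (ξ - 3 * τ) η α β ≠ 0) :
    dEta (dEta (vv α β)) ξ η τ = 2 * g2tt (ξ - 3 * τ) η α β := by
  show deriv (fun r => dEta (vv α β) ξ r τ) η = _
  have hev : (fun r => dEta (vv α β) ξ r τ) =ᶠ[nhds η] fun r => 2 * g2t (ξ - 3 * τ) r α β := by
    filter_upwards [evt α β (ξ - 3 * τ) h] with r hr using pwe α β ξ r τ hr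
  rw [hev.deriv_eq]
  exact ((hg2tt (ξ - 3 * τ) η α β h).const_mul 2).deriv

private lemma mainlem (α β ξ η τ : ℝ) (h : F2tilde (ξ - 3 * τ) η α β ≠ 0) :
    KPIAt (vv α β) ξ η τ := by
  have hev : (fun s => dTau (vv α β) s η τ + 6 * vv α β s η τ * dXi (vv α β) s η τ
        + dXi (dXi (dXi (vv α β))) s η τ)
      =ᶠ[nhds ξ] fun s => 2 * (g3 (s - 3 * τ) η α β * (-3))
        + 6 * (2 * g2 (s - 3 * τ) η α β) * (2 * g3 (s - 3 * τ) η α β)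
        + 2 * g5 (s - 3 * τ) η α β := by
    filter_upwards [evx α β η (3 * τ) h] with s hs
    rw [pwt α β s η τ hs, pwv α β s η τ hs, pw3 α β s η τ hs, pw5 α β s η τ hs]
  have A1 := ((shiftX (3 * τ) ξ (hg4 (ξ - 3 * τ) η α β h)).mul_const (-3)).const_mul 2
  have A2 := (((shiftX (3 * τ) ξ (hg3 (ξ - 3 * τ) η α β h)).const_mul 2).const_mul 6).mul
      ((shiftX (3 * τ) ξ (hg4 (ξ - 3 * τ) η α β h)).const_mul 2)
  have A3 := (shiftX (3 * τ) ξ (hg6 (ξ - 3 * τ) η α β h)).const_mul 2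
  have HD : HasDerivAt (fun s => 2 * (g3 (s - 3 * τ) η α β * (-3))
        + 6 * (2 * g2 (s - 3 * τ) η α β) * (2 * g3 (s - 3 * τ) η α β)
        + 2 * g5 (s - 3 * τ) η α β)
      ((-6) * g4 (ξ - 3 * τ) η α β + 24 * (g3 (ξ - 3 * τ) η α β * g3 (ξ - 3 * τ) η α β)
        + 24 * (g2 (ξ - 3 * τ) η α β * g4 (ξ - 3 * τ) η α β) + 2 * g6 (ξ - 3 * τ) η α β) ξ :=
    hdc ((A1.add A2).add A3) (by beta_reduce; ring)
  have HD2 := HD.congr_of_eventuallyEq hev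
  show deriv (fun s => dTau (vv α β) s η τ + 6 * vv α β s η τ * dXi (vv α β) s η τ
      + dXi (dXi (dXi (vv α β))) s η τ) ξ = 3 * dEta (dEta (vv α β)) ξ η τ
  rw [HD2.deriv, pwee α β ξ η τ h]
  linear_combination key (ξ - 3 * τ) η α β h


theorem kpi_from_boussinesq_rational (α β : ℝ) :
    ∀ ξ η τ : ℝ, 0 < F2tilde (ξ - 3 * τ) η α β →
      KPIAt (fun ξ' η' τ' =>
        2 * dXi (dXi (fun ξ'' η'' τ'' =>
          Real.log (F2tilde (ξ'' - 3 * τ'') η'' α β))) ξ' η' τ') ξ η τ := by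
  intro ξ η τ hF
  exact mainlem α β ξ η τ hF.ne'
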